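/- For every real d₂ > 0 and every c ∈ [1/4, 1] one has √(d₂ + (2c − 1)²) − √(d₂ + c) + 2√((√(d₂ + 1) − √(d₂ + c))(√(d₂ + 1) + √(d₂ + (2c − 1)²))) ≥ 0. -/

import Mathlib

theorem triple_resonance_inequality (d2 c : ℝ) (hd2 : d2 > 0)
    (hc1 : 1 / 4 ≤ c) (hc2 : c ≤ 1) :
    Real.sqrt (d2 + (2 * c - 1) ^ 2) - Real.sqrt (d2 + c) +
      2 * Real.sqrt ((Real.sqrt (d2 + 1) - Real.sqrt (d2 + c)) *
        (Real.sqrt (d2 + 1) + Real.sqrt (d2 + (2 * c - 1) ^ 2))) ≥ 0 := by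
  set a := Real.sqrt (d2 + (2 * c - 1) ^ 2) with ha_def
  set b := Real.sqrt (d2 + c) with hb_def
  set w := Real.sqrt (d2 + 1) with hw_def
  have ha0 : 0 ≤ a := Real.sqrt_nonneg _
  have hb0 : 0 ≤ b := Real.sqrt_nonneg _
  have hw0 : 0 ≤ w := Real.sqrt_nonneg _
  have ha2 : a ^ 2 = d2 + (2 * c - 1) ^ 2 := Real.sq_sqrt (by nlinarith [sq_nonneg (2*c-1)])
  have hb2 : b ^ 2 = d2 + c := Real.sq_sqrt (by nlinarith)
  have hw2 : w ^ 2 = d2 + 1 := Real.sq_sqrt (by nlinarith)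
  have hab : a ≤ b := Real.sqrt_le_sqrt (by nlinarith)
  have hbw : b ≤ w := Real.sqrt_le_sqrt (by nlinarith)
  have hw1 : 1 ≤ w := by nlinarith [sq_nonneg (w - 1)]
  have key1 : 4 * (w + a) ≥ (4 * c - 1) * (w + b) := by
    rcases le_or_gt c (3 / 4) with h | h
    · nlinarith [mul_nonneg (by linarith : (0:ℝ) ≤ 4 * c - 1) (by linarith : (0:ℝ) ≤ w - b)]
    · have h2a : 2 * a ≥ b := by nlinarith
      nlinarith [mul_nonneg (by linarith : (0:ℝ) ≤ 4 - 4 * c) (by linarith : (0:ℝ) ≤ w)]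
  have key : 4 * ((w - b) * (w + a)) ≥ (b - a) ^ 2 := by
    have h1 : (1 - c) * (4 * (w + a)) ≥ (1 - c) * ((4 * c - 1) * (w + b)) :=
      mul_le_mul_of_nonneg_left key1 (by linarith)
    have hwb : (0:ℝ) < w + b := by linarith
    have e1 : (w - b) * (w + b) = 1 - c := by linear_combination hw2 - hb2
    have e2 : (b - a) * (b + a) = (1 - c) * (4 * c - 1) := by linear_combination hb2 - ha2
    have h2 : (b - a) ^ 2 * (w + b) ≤ 4 * ((w - b) * (w + a)) * (w + b) := by
      calc (b - a) ^ 2 * (w + b) ≤ (b - a) * (b + a) * (w + b) := by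
            nlinarith [mul_nonneg (mul_nonneg (by linarith : (0:ℝ) ≤ b - a)
              (by linarith : (0:ℝ) ≤ 2 * a)) (le_of_lt hwb)]
        _ = (1 - c) * ((4 * c - 1) * (w + b)) := by linear_combination (w + b) * e2
        _ ≤ (1 - c) * (4 * (w + a)) := h1
        _ = 4 * ((w - b) * (w + a)) * (w + b) := by linear_combination (-4) * (w + a) * e1
    exact (mul_le_mul_iff_of_pos_right hwb).mp h2
  have hsn : 0 ≤ (w - b) * (w + a) := mul_nonneg (by linarith) (by linarith)
  set t := Real.sqrt ((w - b) * (w + a)) with ht_def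
  have hs2 : t ^ 2 = (w - b) * (w + a) := Real.sq_sqrt hsn
  have hs0 : 0 ≤ t := Real.sqrt_nonneg _
  have hba : 0 ≤ b - a := by linarith
  have h4 : (b - a) ^ 2 ≤ (2 * t) ^ 2 := by
    have : (2 * t) ^ 2 = 4 * ((w - b) * (w + a)) := by rw [mul_pow, hs2]; ring
    linarith [key]
  have h5 : b - a ≤ 2 * t := by
    have h6 := Real.sqrt_le_sqrt h4
    rwa [Real.sqrt_sq hba, Real.sqrt_sq (by linarith)] at h6
  linarith
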